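/- Let E be a finite-dimensional real normed vector space, let S ⊆ E be a nonempty closed set, and let f : E → ℝ be the distance function f(p) = infDist(p, S) = inf_{s ∈ S} ‖p − s‖. If x ∉ S and f is differentiable at x, then the derivative Df(x) has operator norm exactly 1. -/

import Mathlib

open Metric

/-- (Eikonal equation) The distance function to a nonempty closed set
`S` in a finite-dimensional real normed vector space has derivative of operator norm
exactly `1` at every point of differentiability outside `S`. -/
theorem norm_fderiv_infDist_eq_one {E : Type*} [NormedAddCommGroup E] [NormedSpace ℝ E]
    [FiniteDimensional ℝ E] (S : Set E) (hne : S.Nonempty) (hclosed : IsClosed S)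
    (x : E) (hx : x ∉ S)
    (hdiff : DifferentiableAt ℝ (fun p => infDist p S) x) :
    ‖fderiv ℝ (fun p => infDist p S) x‖ = 1 := by
  set f : E → ℝ := fun p => infDist p S with hf
  set L := fderiv ℝ f x with hL
  -- upper bound
  have hle : ‖L‖ ≤ 1 := by
    have := norm_fderiv_le_of_lipschitz ℝ (f := f) (x₀ := x) (lipschitz_infDist_pt S)
    simpa using this
  -- nearest point
  obtain ⟨y, hyS, hyd⟩ := hclosed.exists_infDist_eq_dist hne x
  have hd : 0 < infDist x S := (IsClosed.notMem_iff_infDist_pos hclosed hne).mp hx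
  set d := infDist x S with hdd
  have hdy : d = dist x y := hyd
  have hxy : x ≠ y := by
    intro h; rw [h] at hdy; simp at hdy; linarith
  -- curve g t = f (x + t • (y - x))
  set v : E := y - x with hv
  have hcurve : HasDerivAt (fun t : ℝ => x + t • v) v 0 := by
    simpa using ((hasDerivAt_id (0:ℝ)).smul_const v).const_add x
  have hg : HasDerivAt (fun t : ℝ => f (x + t • v)) (L v) 0 := by
    have hx0 : x = x + (0:ℝ) • v := by simp
    have hD : HasFDerivAt f (L : E →L[ℝ] ℝ) (x + (0:ℝ) • v) := hx0 ▸ hdiff.hasFDerivAt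
    exact hD.comp_hasDerivAt 0 hcurve
  -- on Icc 0 1, g t = (1 - t) * d
  have hgeq : ∀ t ∈ Set.Icc (0:ℝ) 1, f (x + t • v) = (1 - t) * d := by
    intro t ht
    have h1 : f (x + t • v) ≤ (1 - t) * d := by
      have : dist (x + t • v) y = (1 - t) * d := by
        rw [dist_eq_norm]
        have : x + t • v - y = -((1 - t) • v) := by
          rw [hv]; module
        rw [this, norm_neg, norm_smul, hdy, dist_eq_norm]
        have : ‖x - y‖ = ‖v‖ := by rw [hv, ← norm_neg]; congr 1; abel
        rw [this, Real.norm_eq_abs, abs_of_nonneg (by linarith [ht.2])]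
      calc f (x + t • v) ≤ dist (x + t • v) y := infDist_le_dist_of_mem hyS
        _ = (1 - t) * d := this
    have h2 : (1 - t) * d ≤ f (x + t • v) := by
      have := infDist_le_infDist_add_dist (x := x) (y := x + t • v) (s := S)
      have hdist : dist x (x + t • v) = t * d := by
        rw [dist_eq_norm]
        have : x - (x + t • v) = -(t • v) := by abel
        rw [this, norm_neg, norm_smul, Real.norm_eq_abs, abs_of_nonneg ht.1]
        congr 1
        rw [hdy, dist_eq_norm, hv, ← norm_neg]; congr 1; abel
      rw [hdist] at this
      simp only [hf] at *
      linarith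
    linarith
  -- derivative within Icc of (1-t)*d is -d
  have hgw : HasDerivWithinAt (fun t : ℝ => f (x + t • v)) (L v) (Set.Icc 0 1) 0 :=
    hg.hasDerivWithinAt
  have hgw2 : HasDerivWithinAt (fun t : ℝ => (1 - t) * d) (-d) (Set.Icc (0:ℝ) 1) 0 := by
    have : HasDerivAt (fun t : ℝ => (1 - t) * d) (-d) 0 := by
      simpa using ((hasDerivAt_id (0:ℝ)).const_sub 1).mul_const d
    exact this.hasDerivWithinAt
  have hgw' : HasDerivWithinAt (fun t : ℝ => (1 - t) * d) (L v) (Set.Icc (0:ℝ) 1) 0 :=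
    hgw.congr (fun t ht => (hgeq t ht).symm) (by simpa using hgeq 0 (by norm_num))
  have hud : UniqueDiffWithinAt ℝ (Set.Icc (0:ℝ) 1) 0 :=
    uniqueDiffOn_Icc one_pos 0 (by norm_num)
  have hLv : L v = -d := hud.eq_deriv _ hgw' hgw2
  -- lower bound
  have hnv : ‖v‖ = d := by
    rw [hv, hdy, dist_eq_norm, ← norm_neg]; congr 1; abel
  have h1 : (1:ℝ) ≤ ‖L‖ := by
    have := L.le_opNorm v
    rw [hLv, hnv] at this
    have : d ≤ ‖L‖ * d := by
      calc d = ‖(-d : ℝ)‖ := by rw [Real.norm_eq_abs, abs_neg, abs_of_pos hd]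
        _ ≤ ‖L‖ * d := this
    exact le_of_mul_le_mul_right (by linarith) hd
  linarith
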